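/- Let M be a matroid on a finite ground set E with rank function r, having no loops and no coloops. Then max{T_M(4,0), T_M(0,4)} ≥ T_M(2,2), where T_M denotes the Tutte polynomial of M. -/

import Mathlib

open Matroid Set

variable {α : Type*}

/-- The rank of a set `X` in a matroid `M`:
the maximum size of an independent subset of `X`. -/
noncomputable def Matroid.rankSet (M : Matroid α) (X : Set α) : ℕ :=
  sSup {n | ∃ I ⊆ X, M.Indep I ∧ I.ncard = n}

/-- The Tutte polynomial of a matroid `M` on a finite type, evaluated at `(x, y) : ℝ × ℝ`:
`T_M(x,y) = Σ_{A ⊆ E} (x−1)^{r(E)−r(A)} · (y−1)^{|A|−r(A)}`. -/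
noncomputable def Matroid.tutte [Fintype α] (M : Matroid α) (x y : ℝ) : ℝ :=
  ∑ A ∈ M.E.toFinite.toFinset.powerset,
    (x - 1) ^ (M.rankSet M.E - M.rankSet ↑A) * (y - 1) ^ (A.card - M.rankSet ↑A)

/-! ### Abstract development: rank functions on finsets -/

namespace TutteAux

variable [DecidableEq α]

/-- abstract rank function axioms -/
structure IsRkFn (E : Finset α) (r : Finset α → ℕ) : Prop where
  protected empty : r ∅ = 0
  mono : ∀ ⦃A B : Finset α⦄, A ⊆ B → B ⊆ E → r A ≤ r B
  insertLe : ∀ ⦃A : Finset α⦄ ⦃e : α⦄, A ⊆ E → e ∈ E → r (insert e A) ≤ r A + 1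
  submod : ∀ ⦃A B : Finset α⦄, A ⊆ E → B ⊆ E → r (A ∪ B) + r (A ∩ B) ≤ r A + r B

/-- abstract subset-expansion Tutte polynomial -/
noncomputable def tutteF (E : Finset α) (r : Finset α → ℕ) (x y : ℝ) : ℝ :=
  ∑ A ∈ E.powerset, (x - 1) ^ (r E - r A) * (y - 1) ^ (A.card - r A)

variable {E A B : Finset α} {r : Finset α → ℕ} {x y : ℝ} {e : α}

theorem IsRkFn.card_le (h : IsRkFn E r) : ∀ A : Finset α, A ⊆ E → r A ≤ A.card := by
  intro A
  induction A using Finset.induction_on with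
  | empty => intro _; simp [h.empty]
  | insert a s hnm ih =>
    intro hsub
    have hs : s ⊆ E := (Finset.subset_insert a s).trans hsub
    have ha : a ∈ E := hsub (Finset.mem_insert_self a s)
    have := h.insertLe hs ha
    have := ih hs
    rw [Finset.card_insert_of_notMem hnm]
    omega

theorem IsRkFn.insert_eq_of_loop (h : IsRkFn E r) (he : e ∈ E) (h0 : r {e} = 0)
    (hA : A ⊆ E) : r (insert e A) = r A := by
  have h1 := h.submod (A := {e}) (B := A) (by simpa using he) hA
  have h2 := h.mono (Finset.subset_insert e A) (Finset.insert_subset he hA)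
  rw [h0] at h1
  rw [← Finset.insert_eq] at h1
  omega

theorem IsRkFn.insert_eq_of_coloop (h : IsRkFn E r) (he : e ∈ E)
    (hc : r (E.erase e) + 1 = r E) (hA : A ⊆ E.erase e) : r (insert e A) = r A + 1 := by
  have hAE : A ⊆ E := hA.trans (Finset.erase_subset e E)
  have hle := h.insertLe hAE he
  have hsub := h.submod (A := insert e A) (B := E.erase e)
    (Finset.insert_subset he hAE) (Finset.erase_subset e E)
  have hU : insert e A ∪ E.erase e = E := by
    ext a
    simp only [Finset.mem_union, Finset.mem_insert, Finset.mem_erase]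
    constructor
    · rintro ((rfl | ha) | ⟨-, ha⟩)
      · exact he
      · exact (Finset.mem_erase.1 (hA ha)).2
      · exact ha
    · intro haE
      by_cases hae : a = e
      · exact Or.inl (Or.inl hae)
      · exact Or.inr ⟨hae, haE⟩
  have hI : insert e A ∩ E.erase e = A := by
    ext a
    simp only [Finset.mem_inter, Finset.mem_insert, Finset.mem_erase]
    constructor
    · rintro ⟨rfl | ha, hne, -⟩
      · exact absurd rfl hne
      · exact ha
    · intro ha
      exact ⟨Or.inr ha, (Finset.mem_erase.1 (hA ha)).1, hAE ha⟩
  rw [hU, hI] at hsub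
  omega

theorem IsRkFn.delete (h : IsRkFn E r) (e : α) : IsRkFn (E.erase e) r where
  empty := h.empty
  mono _ _ hAB hBE := h.mono hAB (hBE.trans (Finset.erase_subset e E))
  insertLe _ _ hA he' :=
    h.insertLe (hA.trans (Finset.erase_subset e E)) ((Finset.mem_erase.1 he').2)
  submod _ _ hA hB :=
    h.submod (hA.trans (Finset.erase_subset e E)) (hB.trans (Finset.erase_subset e E))

/-- the contracted rank function -/
def conr (r : Finset α → ℕ) (e : α) : Finset α → ℕ := fun A => r (insert e A) - 1

theorem IsRkFn.one_le_insert (h : IsRkFn E r) (he : e ∈ E) (h1 : r {e} = 1)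
    (hA : A ⊆ E) : 1 ≤ r (insert e A) := by
  have := h.mono (show {e} ⊆ insert e A by simp) (Finset.insert_subset he hA)
  omega

theorem IsRkFn.contract (h : IsRkFn E r) (he : e ∈ E) (h1 : r {e} = 1) :
    IsRkFn (E.erase e) (conr r e) where
  empty := by simp [conr, h1]
  mono A B hAB hBE := by
    have := h.mono (Finset.insert_subset_insert e hAB)
      (Finset.insert_subset he (hBE.trans (Finset.erase_subset e E)))
    simp only [conr]
    omega
  insertLe A f hA hf := by
    have hAE : A ⊆ E := hA.trans (Finset.erase_subset e E)
    have hfE : f ∈ E := (Finset.mem_erase.1 hf).2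
    have h2 := h.insertLe (A := insert e A) (Finset.insert_subset he hAE) hfE
    have h3 := h.one_le_insert he h1 hAE
    have hcomm : insert e (insert f A) = insert f (insert e A) := Finset.insert_comm e f A
    simp only [conr, hcomm]
    omega
  submod A B hA hB := by
    have hAE : A ⊆ E := hA.trans (Finset.erase_subset e E)
    have hBE : B ⊆ E := hB.trans (Finset.erase_subset e E)
    have hsub := h.submod (A := insert e A) (B := insert e B)
      (Finset.insert_subset he hAE) (Finset.insert_subset he hBE)
    have hU : insert e A ∪ insert e B = insert e (A ∪ B) := by
      simp [Finset.insert_union, Finset.union_insert]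
    have hI : insert e A ∩ insert e B = insert e (A ∩ B) := by
      rw [Finset.insert_inter_of_mem (Finset.mem_insert_self e B),
        Finset.inter_insert_of_notMem (fun hcon => (Finset.mem_erase.1 (hA hcon)).1 rfl)]
    rw [hU, hI] at hsub
    have b1 := h.one_le_insert he h1 hAE
    have b2 := h.one_le_insert he h1 hBE
    have b3 := h.one_le_insert he h1 ((Finset.union_subset hA hB).trans (Finset.erase_subset e E))
    have b4 : 1 ≤ r (insert e (A ∩ B)) := h.one_le_insert he h1 (Finset.inter_subset_left.trans hAE)
    simp only [conr]
    omega

theorem sum_powerset_split (he : e ∈ E) (f : Finset α → ℝ) :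
    ∑ A ∈ E.powerset, f A =
      ∑ A ∈ (E.erase e).powerset, f A + ∑ A ∈ (E.erase e).powerset, f (insert e A) := by
  conv_lhs => rw [← Finset.insert_erase he]
  exact Finset.sum_powerset_insert (Finset.notMem_erase e E) f

theorem tutteF_empty : tutteF (∅ : Finset α) r x y = 1 := by
  simp [tutteF]

theorem tutteF_loop (h : IsRkFn E r) (he : e ∈ E) (h0 : r {e} = 0) :
    tutteF E r x y = y * tutteF (E.erase e) r x y := by
  have hEr : r (E.erase e) = r E := by
    conv_rhs => rw [← Finset.insert_erase he]
    exact (h.insert_eq_of_loop he h0 (Finset.erase_subset e E)).symm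
  rw [tutteF, sum_powerset_split he]
  have h2 : ∀ A ∈ (E.erase e).powerset,
      (x - 1) ^ (r E - r (insert e A)) * (y - 1) ^ ((insert e A).card - r (insert e A)) =
      (y - 1) * ((x - 1) ^ (r E - r A) * (y - 1) ^ (A.card - r A)) := by
    intro A hA
    have hAe : A ⊆ E.erase e := Finset.mem_powerset.1 hA
    have hAE : A ⊆ E := hAe.trans (Finset.erase_subset e E)
    have heA : e ∉ A := fun hmem => (Finset.mem_erase.1 (hAe hmem)).1 rfl
    rw [h.insert_eq_of_loop he h0 hAE, Finset.card_insert_of_notMem heA]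
    have hrA : r A ≤ A.card := h.card_le A hAE
    have hstep : A.card + 1 - r A = (A.card - r A) + 1 := by omega
    rw [hstep, pow_succ]
    ring
  rw [Finset.sum_congr rfl h2, ← Finset.mul_sum, tutteF, hEr]
  ring

theorem tutteF_coloop (h : IsRkFn E r) (he : e ∈ E) (hc : r (E.erase e) + 1 = r E) :
    tutteF E r x y = x * tutteF (E.erase e) r x y := by
  rw [tutteF, sum_powerset_split he, tutteF, ← Finset.sum_add_distrib, Finset.mul_sum]
  apply Finset.sum_congr rfl
  intro A hA
  have hAe : A ⊆ E.erase e := Finset.mem_powerset.1 hA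
  have hAE : A ⊆ E := hAe.trans (Finset.erase_subset e E)
  have heA : e ∉ A := fun hmem => (Finset.mem_erase.1 (hAe hmem)).1 rfl
  have hins := h.insert_eq_of_coloop he hc hAe
  have hrA : r A ≤ r (E.erase e) := h.mono hAe (Finset.erase_subset e E)
  rw [hins, Finset.card_insert_of_notMem heA]
  have e1 : r E - r A = (r (E.erase e) - r A) + 1 := by omega
  have e2 : r E - (r A + 1) = r (E.erase e) - r A := by omega
  have e3 : A.card + 1 - (r A + 1) = A.card - r A := by omega
  rw [e1, e2, e3, pow_succ]
  ring

theorem tutteF_delcon (h : IsRkFn E r) (he : e ∈ E) (h1 : r {e} = 1)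
    (hnc : r (E.erase e) = r E) :
    tutteF E r x y = tutteF (E.erase e) r x y + tutteF (E.erase e) (conr r e) x y := by
  rw [tutteF, sum_powerset_split he]
  congr 1
  · rw [tutteF, hnc]
  · rw [tutteF]
    apply Finset.sum_congr rfl
    intro A hA
    have hAe : A ⊆ E.erase e := Finset.mem_powerset.1 hA
    have hAE : A ⊆ E := hAe.trans (Finset.erase_subset e E)
    have heA : e ∉ A := fun hmem => (Finset.mem_erase.1 (hAe hmem)).1 rfl
    have hge1 : 1 ≤ r (insert e A) := h.one_le_insert he h1 hAE
    have hler : r (insert e A) ≤ r E := h.mono (Finset.insert_subset he hAE) Finset.Subset.rfl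
    have hcards : r (insert e A) ≤ A.card + 1 := by
      have := h.insertLe hAE he
      have := h.card_le A hAE
      omega
    have hctop : conr r e (E.erase e) = r E - 1 := by
      rw [conr, Finset.insert_erase he]
    rw [hctop, Finset.card_insert_of_notMem heA]
    simp only [conr]
    have e1 : r E - r (insert e A) = (r E - 1) - (r (insert e A) - 1) := by omega
    have e2 : A.card + 1 - r (insert e A) = A.card - (r (insert e A) - 1) := by omega
    rw [e1, e2]

theorem one_le_singleton_rk (h : IsRkFn E r) (he : e ∈ E) (hne : r {e} ≠ 0) : r {e} = 1 := by
  have := h.card_le {e} (by simpa using he)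
  simp only [Finset.card_singleton] at this
  omega

theorem erase_rk_eq (h : IsRkFn E r) (he : e ∈ E) (hnc : r (E.erase e) + 1 ≠ r E) :
    r (E.erase e) = r E := by
  have ha : r (E.erase e) ≤ r E := h.mono (Finset.erase_subset e E) Finset.Subset.rfl
  have hb : r E ≤ r (E.erase e) + 1 := by
    conv_lhs => rw [← Finset.insert_erase he]
    exact h.insertLe (Finset.erase_subset e E) he
  omega

theorem tutteF_nonneg (hx : 0 ≤ x) (hy : 0 ≤ y) :
    ∀ E : Finset α, ∀ r : Finset α → ℕ, IsRkFn E r → 0 ≤ tutteF E r x y := by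
  intro E
  induction E using Finset.strongInduction with
  | _ E ih =>
    intro r h
    by_cases hloop : ∃ e ∈ E, r {e} = 0
    · obtain ⟨e, he, h0⟩ := hloop
      rw [tutteF_loop h he h0]
      exact mul_nonneg hy (ih _ (Finset.erase_ssubset he) r (h.delete e))
    · by_cases hco : ∃ e ∈ E, r (E.erase e) + 1 = r E
      · obtain ⟨e, he, hc⟩ := hco
        rw [tutteF_coloop h he hc]
        exact mul_nonneg hx (ih _ (Finset.erase_ssubset he) r (h.delete e))
      · rcases E.eq_empty_or_nonempty with rfl | ⟨e, he⟩
        · rw [tutteF_empty]; norm_num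
        · push_neg at hloop hco
          have h1 : r {e} = 1 := one_le_singleton_rk h he (hloop e he)
          have hnc : r (E.erase e) = r E := erase_rk_eq h he (hco e he)
          rw [tutteF_delcon h he h1 hnc]
          have t1 := ih _ (Finset.erase_ssubset he) r (h.delete e)
          have t2 := ih _ (Finset.erase_ssubset he) _ (h.contract he h1)
          linarith

theorem tutteF_four :
    ∀ E : Finset α, ∀ r : Finset α → ℕ, IsRkFn E r → (∀ e ∈ E, r {e} = 1) →
      (4 : ℝ) ^ (r E) ≤ tutteF E r 4 0 := by
  intro E
  induction E using Finset.strongInduction with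
  | _ E ih =>
    intro r h hl
    by_cases hco : ∃ e ∈ E, r (E.erase e) + 1 = r E
    · obtain ⟨e, he, hc⟩ := hco
      rw [tutteF_coloop h he hc]
      have IH : (4 : ℝ) ^ (r (E.erase e)) ≤ tutteF (E.erase e) r 4 0 :=
        ih _ (Finset.erase_ssubset he) r (h.delete e)
          (fun f hf => hl f ((Finset.mem_erase.1 hf).2))
      have hpow : (4 : ℝ) ^ (r E) = 4 * 4 ^ (r (E.erase e)) := by
        rw [← hc, pow_succ]; ring
      rw [hpow]
      linarith
    · rcases E.eq_empty_or_nonempty with rfl | ⟨e, he⟩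
      · rw [tutteF_empty, h.empty, pow_zero]
      · push_neg at hco
        have h1 : r {e} = 1 := hl e he
        have hnc : r (E.erase e) = r E := erase_rk_eq h he (hco e he)
        rw [tutteF_delcon h he h1 hnc]
        have t1 : (4 : ℝ) ^ (r E) ≤ tutteF (E.erase e) r 4 0 := by
          have := ih _ (Finset.erase_ssubset he) r (h.delete e)
            (fun f hf => hl f ((Finset.mem_erase.1 hf).2))
          rwa [hnc] at this
        have t2 := tutteF_nonneg (x := 4) (y := 0) (by norm_num) le_rfl
          (E.erase e) _ (h.contract he h1)
        linarith

theorem tutteF_zero_four :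
    ∀ E : Finset α, ∀ r : Finset α → ℕ, IsRkFn E r → (∀ e ∈ E, r (E.erase e) = r E) →
      (4 : ℝ) ^ (E.card - r E) ≤ tutteF E r 0 4 := by
  intro E
  induction E using Finset.strongInduction with
  | _ E ih =>
    intro r h hco
    by_cases hloop : ∃ e ∈ E, r {e} = 0
    · obtain ⟨e, he, h0⟩ := hloop
      rw [tutteF_loop h he h0]
      have hco' : ∀ f ∈ E.erase e, r ((E.erase e).erase f) = r (E.erase e) := by
        intro f hf
        obtain ⟨hfe, hfE⟩ := Finset.mem_erase.1 hf
        have heEf : e ∈ E.erase f := Finset.mem_erase.2 ⟨fun hcon => hfe hcon.symm, he⟩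
        have h3 : r (insert e ((E.erase f).erase e)) = r ((E.erase f).erase e) :=
          h.insert_eq_of_loop he h0
            (((E.erase f).erase_subset e).trans (E.erase_subset f))
        rw [Finset.insert_erase heEf] at h3
        rw [Finset.erase_right_comm, ← h3, hco f hfE, hco e he]
      have IH := ih _ (Finset.erase_ssubset he) r (h.delete e) hco'
      have hrc : r E ≤ (E.erase e).card := by
        have := h.card_le (E.erase e) (Finset.erase_subset e E)
        rw [hco e he] at this
        exact this
      rw [Finset.card_erase_of_mem he, hco e he] at IH
      have hcard1 : 1 ≤ E.card := Finset.card_pos.2 ⟨e, he⟩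
      rw [Finset.card_erase_of_mem he] at hrc
      have hstep : E.card - r E = (E.card - 1 - r E) + 1 := by omega
      rw [hstep, pow_succ]
      linarith
    · rcases E.eq_empty_or_nonempty with rfl | ⟨e, he⟩
      · rw [tutteF_empty, h.empty]
        simp
      · push_neg at hloop
        have h1 : r {e} = 1 := one_le_singleton_rk h he (hloop e he)
        rw [tutteF_delcon h he h1 (hco e he)]
        have t1 := tutteF_nonneg (x := 0) (y := 4) le_rfl (by norm_num)
          (E.erase e) r (h.delete e)
        have hco' : ∀ f ∈ E.erase e, conr r e ((E.erase e).erase f) = conr r e (E.erase e) := by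
          intro f hf
          obtain ⟨hfe, hfE⟩ := Finset.mem_erase.1 hf
          have heEf : e ∈ E.erase f := Finset.mem_erase.2 ⟨fun hcon => hfe hcon.symm, he⟩
          simp only [conr]
          rw [Finset.erase_right_comm, Finset.insert_erase heEf, Finset.insert_erase he,
            hco f hfE]
        have IH := ih _ (Finset.erase_ssubset he) _ (h.contract he h1) hco'
        have htop : conr r e (E.erase e) = r E - 1 := by
          rw [conr, Finset.insert_erase he]
        have hre : 1 ≤ r E := by
          have := h.mono (show {e} ⊆ E by simpa using he) Finset.Subset.rfl
          omega
        have hrc : r E ≤ E.card := h.card_le E Finset.Subset.rfl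
        rw [htop, Finset.card_erase_of_mem he] at IH
        have hstep : E.card - 1 - (r E - 1) = E.card - r E := by omega
        rw [hstep] at IH
        linarith

end TutteAux

/-! ### Matroid rank facts -/

section MatroidRank

variable [Fintype α] {M : Matroid α} {X Y I J : Set α} {e : α}

theorem Matroid.rankSet_eq_of_basis (hI : M.IsBasis I X) : M.rankSet X = I.ncard := by
  have hXE : X ⊆ M.E := hI.subset_ground
  have hmem : I.ncard ∈ {n | ∃ J ⊆ X, M.Indep J ∧ J.ncard = n} := ⟨I, hI.subset, hI.indep, rfl⟩
  have hub : ∀ n ∈ {n | ∃ J ⊆ X, M.Indep J ∧ J.ncard = n}, n ≤ I.ncard := by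
    rintro n ⟨J, hJX, hJind, rfl⟩
    obtain ⟨J', hJ', hJJ'⟩ := hJind.subset_isBasis_of_subset hJX hXE
    have henc : J'.encard = I.encard := hJ'.encard_eq_encard hI
    calc J.ncard ≤ J'.ncard := Set.ncard_le_ncard hJJ' J'.toFinite
      _ = I.ncard := by rw [Set.ncard, Set.ncard, henc]
  exact le_antisymm (csSup_le ⟨_, hmem⟩ hub) (le_csSup ⟨I.ncard, hub⟩ hmem)

theorem Matroid.ncard_le_rankSet (hJ : M.Indep J) (hJX : J ⊆ X) (hX : X ⊆ M.E) :
    J.ncard ≤ M.rankSet X := by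
  obtain ⟨I, hI⟩ := M.exists_isBasis X hX
  rw [M.rankSet_eq_of_basis hI]
  obtain ⟨J', hJ', hJJ'⟩ := hJ.subset_isBasis_of_subset hJX hX
  have henc : J'.encard = I.encard := hJ'.encard_eq_encard hI
  calc J.ncard ≤ J'.ncard := Set.ncard_le_ncard hJJ' J'.toFinite
    _ = I.ncard := by rw [Set.ncard, Set.ncard, henc]

theorem Matroid.rankSet_le_ncard (hX : X ⊆ M.E) : M.rankSet X ≤ X.ncard := by
  obtain ⟨I, hI⟩ := M.exists_isBasis X hX
  rw [M.rankSet_eq_of_basis hI]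
  exact Set.ncard_le_ncard hI.subset X.toFinite

theorem Matroid.rankSet_empty' : M.rankSet ∅ = 0 := by
  obtain ⟨I, hI⟩ := M.exists_isBasis ∅ (empty_subset _)
  rw [M.rankSet_eq_of_basis hI, Set.subset_empty_iff.1 hI.subset]
  simp

theorem Matroid.rankSet_mono (hXY : X ⊆ Y) (hY : Y ⊆ M.E) : M.rankSet X ≤ M.rankSet Y := by
  obtain ⟨I, hI⟩ := M.exists_isBasis X (hXY.trans hY)
  rw [M.rankSet_eq_of_basis hI]
  exact M.ncard_le_rankSet hI.indep (hI.subset.trans hXY) hY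

theorem Matroid.rankSet_insert_le (he : e ∈ M.E) (hX : X ⊆ M.E) :
    M.rankSet (insert e X) ≤ M.rankSet X + 1 := by
  obtain ⟨J, hJ⟩ := M.exists_isBasis (insert e X) (insert_subset he hX)
  rw [M.rankSet_eq_of_basis hJ]
  have hd : J \ {e} ⊆ X := by
    rintro a ⟨haJ, hae⟩
    rcases hJ.subset haJ with rfl | haX
    · exact absurd rfl hae
    · exact haX
  have h1 : (J \ {e}).ncard ≤ M.rankSet X :=
    M.ncard_le_rankSet (hJ.indep.diff {e}) hd hX
  have h2 : J.ncard ≤ (J \ {e}).ncard + 1 := by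
    have hsub : J ⊆ insert e (J \ {e}) := by
      intro a ha
      by_cases hae : a = e
      · exact hae ▸ mem_insert _ _
      · exact mem_insert_of_mem _ ⟨ha, hae⟩
    calc J.ncard ≤ (insert e (J \ {e})).ncard :=
          Set.ncard_le_ncard hsub (Set.Finite.insert e (J \ {e}).toFinite)
      _ ≤ (J \ {e}).ncard + 1 := Set.ncard_insert_le _ _
  omega

theorem Matroid.rankSet_submod (hX : X ⊆ M.E) (hY : Y ⊆ M.E) :
    M.rankSet (X ∪ Y) + M.rankSet (X ∩ Y) ≤ M.rankSet X + M.rankSet Y := by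
  obtain ⟨I, hI⟩ := M.exists_isBasis (X ∩ Y) ((inter_subset_left).trans hX)
  obtain ⟨J, hJ, hIJ⟩ := hI.indep.subset_isBasis_of_subset
    (hI.subset.trans (inter_subset_left.trans subset_union_left)) (union_subset hX hY)
  rw [M.rankSet_eq_of_basis hI, M.rankSet_eq_of_basis hJ]
  have hJX : (J ∩ X).ncard ≤ M.rankSet X :=
    M.ncard_le_rankSet (hJ.indep.inter_right X) inter_subset_right hX
  have hJY : (J ∩ Y).ncard ≤ M.rankSet Y :=
    M.ncard_le_rankSet (hJ.indep.inter_right Y) inter_subset_right hY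
  have hcard : ((J ∩ X) ∪ (J ∩ Y)).ncard + ((J ∩ X) ∩ (J ∩ Y)).ncard
      = (J ∩ X).ncard + (J ∩ Y).ncard :=
    Set.ncard_union_add_ncard_inter _ _ (J ∩ X).toFinite (J ∩ Y).toFinite
  have hU : (J ∩ X) ∪ (J ∩ Y) = J := by
    rw [← Set.inter_union_distrib_left]
    exact inter_eq_left.2 hJ.subset
  have hIsub : I ⊆ (J ∩ X) ∩ (J ∩ Y) := by
    intro a ha
    exact ⟨⟨hIJ ha, (hI.subset ha).1⟩, hIJ ha, (hI.subset ha).2⟩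
  have hle : I.ncard ≤ ((J ∩ X) ∩ (J ∩ Y)).ncard :=
    Set.ncard_le_ncard hIsub ((J ∩ X) ∩ (J ∩ Y)).toFinite
  rw [hU] at hcard
  omega

end MatroidRank

/-! ### The main theorem -/

/-- If a matroid on a finite ground set has no loops and no coloops, then
`max{T_M(4,0), T_M(0,4)} ≥ T_M(2,2)`. -/
theorem tutte_two_two_le_max [Fintype α] (M : Matroid α)
    (hloop : ∀ e ∈ M.E, M.rankSet {e} ≠ 0)
    (hcoloop : ∀ e ∈ M.E, ¬ (∀ B, M.IsBase B → e ∈ B)) :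
    M.tutte 2 2 ≤ max (M.tutte 4 0) (M.tutte 0 4) := by
  classical
  set E : Finset α := M.E.toFinite.toFinset with hE
  have hEcoe : (↑E : Set α) = M.E := Set.Finite.coe_toFinset _
  set r : Finset α → ℕ := fun A => M.rankSet ↑A with hrdef
  have hsub : ∀ {A : Finset α}, A ⊆ E → (↑A : Set α) ⊆ M.E := by
    intro A hA
    rw [← hEcoe]
    exact_mod_cast hA
  have hr : TutteAux.IsRkFn E r := by
    constructor
    · simp only [hrdef, Finset.coe_empty]
      exact Matroid.rankSet_empty'
    · intro A B hAB hBE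
      exact M.rankSet_mono (Finset.coe_subset.2 hAB) (hsub hBE)
    · intro A e hA he
      have heM : e ∈ M.E := by rw [← hEcoe]; exact_mod_cast he
      simp only [hrdef, Finset.coe_insert]
      exact M.rankSet_insert_le heM (hsub hA)
    · intro A B hA hB
      simp only [hrdef, Finset.coe_union, Finset.coe_inter]
      exact M.rankSet_submod (hsub hA) (hsub hB)
  have hmemE : ∀ {e : α}, e ∈ E ↔ e ∈ M.E := by
    intro e
    rw [← hEcoe]
    simp
  have hrE : r E = M.rankSet M.E := by rw [hrdef]; simp only [hEcoe]
  have hl : ∀ e ∈ E, r {e} = 1 := by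
    intro e he
    have heM : e ∈ M.E := hmemE.1 he
    apply TutteAux.one_le_singleton_rk hr he
    simp only [hrdef, Finset.coe_singleton]
    exact hloop e heM
  have hc : ∀ e ∈ E, r (E.erase e) = r E := by
    intro e he
    have heM : e ∈ M.E := hmemE.1 he
    obtain ⟨B, hB, heB⟩ := by
      have := hcoloop e heM
      push_neg at this
      exact this
    have hcoeer : (↑(E.erase e) : Set α) = M.E \ {e} := by
      rw [Finset.coe_erase, hEcoe]
    apply le_antisymm
    · exact hr.mono (Finset.erase_subset e E) Finset.Subset.rfl
    · have hBsub : B ⊆ M.E \ {e} := by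
        intro a ha
        exact ⟨hB.subset_ground ha, fun hcon => heB (hcon ▸ ha)⟩
      have h1 : B.ncard ≤ M.rankSet (M.E \ {e}) :=
        M.ncard_le_rankSet hB.indep hBsub diff_subset
      have h2 : M.rankSet M.E = B.ncard := M.rankSet_eq_of_basis hB.isBasis_ground
      simp only [hrdef, hcoeer, hEcoe]
      omega
  have htutte : ∀ x y : ℝ, M.tutte x y = TutteAux.tutteF E r x y := by
    intro x y
    rw [Matroid.tutte, TutteAux.tutteF, hrE]
  have h22 : M.tutte 2 2 = 2 ^ E.card := by
    rw [htutte, TutteAux.tutteF]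
    have hone : ∀ A ∈ E.powerset,
        ((2:ℝ) - 1) ^ (r E - r A) * ((2:ℝ) - 1) ^ (A.card - r A) = 1 := by
      intro A _
      norm_num
    rw [Finset.sum_congr rfl hone, Finset.sum_const, Finset.card_powerset, nsmul_eq_mul, mul_one]
    push_cast
    ring
  have hrcard : r E ≤ E.card := hr.card_le E Finset.Subset.rfl
  have hpow2 : ∀ n m : ℕ, n ≤ 2 * m → (2 : ℝ) ^ n ≤ 4 ^ m := by
    intro n m hnm
    calc (2 : ℝ) ^ n ≤ 2 ^ (2 * m) := by
          apply pow_le_pow_right₀ (by norm_num) hnm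
      _ = 4 ^ m := by rw [pow_mul]; norm_num
  rcases le_or_gt E.card (2 * r E) with hcase | hcase
  · apply le_trans _ (le_max_left _ _)
    rw [h22, htutte]
    calc (2 : ℝ) ^ E.card ≤ 4 ^ (r E) := hpow2 _ _ hcase
      _ ≤ TutteAux.tutteF E r 4 0 := TutteAux.tutteF_four E r hr hl
  · apply le_trans _ (le_max_right _ _)
    rw [h22, htutte]
    calc (2 : ℝ) ^ E.card ≤ 4 ^ (E.card - r E) := hpow2 _ _ (by omega)
      _ ≤ TutteAux.tutteF E r 0 4 := TutteAux.tutteF_zero_four E r hr hc
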